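/- Let α, β ∈ S_n with at least one fixed point free. If both α and β contain a transposition in their disjoint cycle decomposition, then there exists σ ∈ S_n such that σ⁻¹ασ·β has at least two fixed points. -/

import Mathlib

lemma exists_swap_of_two_mem_cycleType {G : Type*} [DecidableEq G] [Fintype G]
    (f : Equiv.Perm G) (h : 2 ∈ f.cycleType) :
    ∃ a b : G, a ≠ b ∧ f a = b ∧ f b = a := by
  rw [Equiv.Perm.cycleType_def, Multiset.mem_map] at h
  obtain ⟨g, hg, hcard⟩ := h
  have hsw : g.IsSwap := Equiv.Perm.card_support_eq_two.mp hcard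
  obtain ⟨a, b, hab, rfl⟩ := hsw
  rw [← Finset.mem_def, Equiv.Perm.mem_cycleFactorsFinset_iff] at hg
  have ha : (Equiv.swap a b) a = f a := hg.2 a (by
    simp [Equiv.Perm.mem_support, Equiv.swap_apply_left, hab])
  have hb : (Equiv.swap a b) b = f b := hg.2 b (by
    simp [Equiv.Perm.mem_support, Equiv.swap_apply_right, hab])
  refine ⟨a, b, hab, ?_, ?_⟩
  · rw [← ha, Equiv.swap_apply_left]
  · rw [← hb, Equiv.swap_apply_right]

theorem stmt14 (n : ℕ) (hn : 4 ≤ n) (α β : Equiv.Perm (Fin n))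
    (hfpf : (∀ i : Fin n, α i ≠ i) ∨ (∀ i : Fin n, β i ≠ i))
    (hcα : 2 ∈ α.cycleType) (hcβ : 2 ∈ β.cycleType) :
    ∃ σ : Equiv.Perm (Fin n),
      2 ≤ (Finset.univ.filter fun i => (σ⁻¹ * α * σ * β) i = i).card := by
  obtain ⟨a, b, hab, hαa, hαb⟩ := exists_swap_of_two_mem_cycleType α hcα
  obtain ⟨c, d, hcd, hβc, hβd⟩ := exists_swap_of_two_mem_cycleType β hcβ
  set τ1 : Equiv.Perm (Fin n) := Equiv.swap c a with hτ1
  set σ : Equiv.Perm (Fin n) := Equiv.swap (τ1 d) b * τ1 with hσ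
  have hd1 : τ1 d ≠ a := by
    intro h
    apply hcd
    have : τ1 d = τ1 c := by rw [h, hτ1, Equiv.swap_apply_left]
    exact (τ1.injective this).symm ▸ rfl
  have hσc : σ c = a := by
    simp only [hσ, Equiv.Perm.mul_apply, hτ1, Equiv.swap_apply_left]
    rw [Equiv.swap_apply_of_ne_of_ne hd1.symm hab]
  have hσd : σ d = b := by
    simp only [hσ, Equiv.Perm.mul_apply, Equiv.swap_apply_left]
  refine ⟨σ, ?_⟩
  have hc : (σ⁻¹ * α * σ * β) c = c := by
    simp only [Equiv.Perm.mul_apply, hβc, hσd, hαb, ← hσc, Equiv.Perm.inv_def, Equiv.symm_apply_apply]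
  have hd : (σ⁻¹ * α * σ * β) d = d := by
    simp only [Equiv.Perm.mul_apply, hβd, hσc, hαa, ← hσd, Equiv.Perm.inv_def, Equiv.symm_apply_apply]
  calc 2 = ({c, d} : Finset (Fin n)).card := by rw [Finset.card_insert_of_notMem (by simpa using hcd), Finset.card_singleton]
    _ ≤ _ := Finset.card_le_card (by
        intro x hx
        simp only [Finset.mem_insert, Finset.mem_singleton] at hx
        rcases hx with rfl | rfl <;>
          exact Finset.mem_filter.mpr ⟨Finset.mem_univ _, by assumption⟩)
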